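/- A graph G on N vertices is a chain graph (i.e., bipartite with no induced 2K_2) if and only if there exist an enumeration v_1, …, v_N of its vertices and a map w : {1, …, N} → {1, 2} such that for all 1 ≤ i < j ≤ N, v_i and v_j are adjacent if and only if w(i) = 1 and w(j) = 2. -/

import Mathlib

open SimpleGraph

/-- The disjoint union of two edges. -/
def twoK2 : SimpleGraph (Fin 2 × Fin 2) :=
  SimpleGraph.fromRel (fun x y => x.1 = y.1)

lemma no2k2_aux {V : Type*} (G : SimpleGraph V) (h : ¬ Nonempty (twoK2 ↪g G))
    {a b a' b' : V} (hab : G.Adj a b) (ha'b' : G.Adj a' b')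
    (h1 : ¬ G.Adj a a') (h2 : ¬ G.Adj a b') (h3 : ¬ G.Adj b a') (h4 : ¬ G.Adj b b') :
    False := by
  have hne1 : a ≠ b := hab.ne
  have hne2 : a' ≠ b' := ha'b'.ne
  have hne3 : a ≠ a' := by rintro rfl; exact h2 ha'b'
  have hne4 : a ≠ b' := by rintro rfl; exact h4 hab.symm
  have hne5 : b ≠ a' := by rintro rfl; exact h4 ha'b'
  have hne6 : b ≠ b' := by rintro rfl; exact h2 hab
  have h1' : ¬ G.Adj a' a := fun hh => h1 hh.symm
  have h2' : ¬ G.Adj b' a := fun hh => h2 hh.symm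
  have h3' : ¬ G.Adj a' b := fun hh => h3 hh.symm
  have h4' : ¬ G.Adj b' b := fun hh => h4 hh.symm
  refine h ⟨⟨⟨fun p => ![![a, b], ![a', b']] p.1 p.2, ?_⟩, ?_⟩⟩
  · intro p q hpq
    fin_cases p <;> fin_cases q <;>
      simp_all [Matrix.cons_val_zero, Matrix.cons_val_one, Matrix.head_cons]
  · intro p q
    fin_cases p <;> fin_cases q <;>
      simp_all [twoK2, SimpleGraph.fromRel_adj, hab.symm, ha'b'.symm,
        Matrix.cons_val_zero, Matrix.cons_val_one, Matrix.head_cons, G.irrefl,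
        eq_comm] <;> decide

lemma nested_aux {V : Type*} (G : SimpleGraph V) (h : ¬ Nonempty (twoK2 ↪g G))
    (c : V → Fin 2) (hc : ∀ x y, G.Adj x y → c x ≠ c y)
    {a a' : V} (ha : c a = 0) (ha' : c a' = 0) :
    (∀ y, G.Adj a y → G.Adj a' y) ∨ (∀ y, G.Adj a' y → G.Adj a y) := by
  by_contra hcon
  push_neg at hcon
  obtain ⟨⟨b, hab, hnb⟩, ⟨b', ha'b', hnb'⟩⟩ := hcon
  have hcb : c b = 1 := by
    have := hc a b hab; rw [ha] at this; omega
  have hcb' : c b' = 1 := by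
    have := hc a' b' ha'b'; rw [ha'] at this; omega
  refine no2k2_aux G h hab ha'b' ?_ hnb' ?_ ?_
  · intro hh; exact hc a a' hh (by rw [ha, ha'])
  · intro hh; exact hnb hh.symm
  · intro hh; exact hc b b' hh (by rw [hcb, hcb'])

lemma key_lemma : ∀ (n : ℕ) (V : Type u) [Fintype V] (G : SimpleGraph V)
    (c : V → Fin 2), Fintype.card V = n → (∀ x y, G.Adj x y → c x ≠ c y) →
    (¬ Nonempty (twoK2 ↪g G)) →
    ∃ v : Fin n ≃ V, ∀ i j : Fin n, i < j →
      (G.Adj (v i) (v j) ↔ c (v i) = 0 ∧ c (v j) = 1) := by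
  intro n
  induction n with
  | zero =>
    intro V _ G c hcard hc h2
    have : IsEmpty V := Fintype.card_eq_zero_iff.mp hcard
    exact ⟨Equiv.equivOfIsEmpty (Fin 0) V, fun i => i.elim0⟩
  | succ n ih =>
    intro V _ G c hcard hc h2
    classical
    have hne : Nonempty V := Fintype.card_pos_iff.mp (by omega)
    -- choose the first vertex x
    have hx : ∃ x : V, (c x = 1 ∧ ∀ y, ¬ G.Adj x y) ∨
        (c x = 0 ∧ ∀ y, c y = 1 → G.Adj x y) := by
      by_cases hiso : ∃ x, c x = 1 ∧ ∀ y, ¬ G.Adj x y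
      · obtain ⟨x, hx⟩ := hiso; exact ⟨x, Or.inl hx⟩
      · push_neg at hiso
        by_cases hB : ∃ b, c b = 1
        · obtain ⟨b0, hb0⟩ := hB
          obtain ⟨a0, ha0⟩ := hiso b0 hb0
          have hca0 : c a0 = 0 := by have := hc b0 a0 ha0; omega
          have hAne : (Finset.univ.filter (fun a => c a = 0)).Nonempty :=
            ⟨a0, by simp [hca0]⟩
          obtain ⟨a, haA, hamax⟩ := Finset.exists_max_image _
            (fun a => (G.neighborFinset a).card) hAne
          simp only [Finset.mem_filter, Finset.mem_univ, true_and] at haA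
          refine ⟨a, Or.inr ⟨haA, ?_⟩⟩
          intro y hy
          obtain ⟨a1, ha1⟩ := hiso y hy
          have hca1 : c a1 = 0 := by have := hc y a1 ha1; omega
          rcases nested_aux G h2 c hc hca1 haA with hsub | hsub
          · exact hsub y ha1.symm
          · have hsub' : G.neighborFinset a ⊆ G.neighborFinset a1 := by
              intro z hz
              rw [SimpleGraph.mem_neighborFinset] at *
              exact hsub z hz
            have hcardle := hamax a1 (by simp [hca1])
            have heq := Finset.eq_of_subset_of_card_le hsub' hcardle
            have : y ∈ G.neighborFinset a := by
              rw [heq, SimpleGraph.mem_neighborFinset]; exact ha1.symm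
            rwa [SimpleGraph.mem_neighborFinset] at this
        · push_neg at hB
          obtain ⟨x⟩ := hne
          refine ⟨x, Or.inr ⟨?_, fun y hy => absurd hy (hB y)⟩⟩
          have := hB x; omega
    obtain ⟨x, hx⟩ := hx
    -- the induced subgraph on V \ {x}
    have hcard' : Fintype.card {y : V // y ≠ x} = n := by
      have h := Fintype.card_congr (Equiv.optionSubtypeNe x)
      rw [Fintype.card_option] at h
      omega
    have h2' : ¬ Nonempty (twoK2 ↪g (G.comap (Function.Embedding.subtype (¬ · = x)))) := by
      rintro ⟨e⟩
      exact h2 ⟨e.trans (SimpleGraph.Embedding.comap (Function.Embedding.subtype _) G)⟩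
    obtain ⟨v', hv'⟩ := ih {y : V // y ≠ x} (G.comap (Function.Embedding.subtype (¬ · = x)))
      (fun y => c y.val) hcard' (fun y z hyz => hc y.val z.val hyz) h2'
    refine ⟨(finSuccEquiv n).trans ((v'.optionCongr).trans (Equiv.optionSubtypeNe x)), ?_⟩
    intro i j
    revert i
    refine Fin.cases ?_ (fun j' => ?_) j
    · exact fun i hij => absurd hij (by simp)
    · intro i
      refine Fin.cases ?_ (fun i' => ?_) i <;> intro hij
      · simp only [Equiv.trans_apply, finSuccEquiv_zero, finSuccEquiv_succ,
          Equiv.optionCongr_apply, Option.map_none, Option.map_some,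
          Equiv.optionSubtypeNe_none, Equiv.optionSubtypeNe_some]
        rcases hx with ⟨hx1, hx2⟩ | ⟨hx1, hx2⟩
        · constructor
          · intro hadj; exact absurd hadj (hx2 _)
          · rintro ⟨h0, -⟩; rw [hx1] at h0; exact absurd h0 (by decide)
        · constructor
          · intro hadj
            refine ⟨hx1, ?_⟩
            have := hc x _ hadj; rw [hx1] at this; omega
          · rintro ⟨-, h1⟩; exact hx2 _ h1
      · have hlt : i' < j' := by
          simpa only [Fin.succ_lt_succ_iff] using hij
        simp only [Equiv.trans_apply, finSuccEquiv_succ,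
          Equiv.optionCongr_apply, Option.map_some, Equiv.optionSubtypeNe_some]
        exact hv' i' j' hlt

/-- A graph is a chain graph (bipartite with no induced `2K_2`) iff it is a
letter graph over the alphabet `{a, b} = Fin 2` with decoder `{(a, b)}`. -/
theorem chain_graph_iff_letter_rep {V : Type*} [Fintype V] (G : SimpleGraph V) :
    (G.Colorable 2 ∧ ¬ Nonempty (twoK2 ↪g G)) ↔
      ∃ (v : Fin (Fintype.card V) ≃ V) (w : Fin (Fintype.card V) → Fin 2),
        ∀ i j : Fin (Fintype.card V), i < j →
          (G.Adj (v i) (v j) ↔ w i = 0 ∧ w j = 1) := by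
  constructor
  · rintro ⟨hcol, h2⟩
    obtain ⟨C⟩ := hcol
    obtain ⟨v, hv⟩ := key_lemma (Fintype.card V) V G C rfl
      (fun x y h => C.valid h) h2
    exact ⟨v, fun i => C (v i), hv⟩
  · rintro ⟨v, w, hvw⟩
    have hadj : ∀ x y, G.Adj x y → ∃ i j : Fin (Fintype.card V), i < j ∧
        w i = 0 ∧ w j = 1 ∧ ((v i = x ∧ v j = y) ∨ (v i = y ∧ v j = x)) := by
      intro x y hxy
      have hne : v.symm x ≠ v.symm y := fun h => hxy.ne (by
        have := congrArg v h; simpa using this)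
      rcases lt_or_gt_of_ne hne with h | h
      · have h' := (hvw _ _ h).mp (by simpa using hxy)
        exact ⟨_, _, h, h'.1, h'.2, Or.inl ⟨by simp, by simp⟩⟩
      · have h' := (hvw _ _ h).mp (by simpa using hxy.symm)
        exact ⟨_, _, h, h'.1, h'.2, Or.inr ⟨by simp, by simp⟩⟩
    constructor
    · refine ⟨SimpleGraph.Coloring.mk (fun x => w (v.symm x)) ?_⟩
      intro x y hxy
      obtain ⟨i, j, hij, h0, h1, hvix⟩ := hadj x y hxy
      rcases hvix with ⟨hx, hy⟩ | ⟨hx, hy⟩ <;>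
        · rw [← hx, ← hy]
          simp only [Equiv.symm_apply_apply]
          rw [h0, h1]; decide
    · rintro ⟨e⟩
      have t1 : twoK2.Adj (0,0) (0,1) := by
        rw [twoK2, SimpleGraph.fromRel_adj]; decide
      have t2 : twoK2.Adj (1,0) (1,1) := by
        rw [twoK2, SimpleGraph.fromRel_adj]; decide
      have E1 : G.Adj (e (0,0)) (e (0,1)) := e.map_rel_iff.mpr t1
      have E2 : G.Adj (e (1,0)) (e (1,1)) := e.map_rel_iff.mpr t2
      have N : ∀ p q : Fin 2 × Fin 2, p.1 ≠ q.1 → ¬ G.Adj (e p) (e q) := by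
        intro p q hpq hAdj
        have := e.map_rel_iff.mp hAdj
        rw [twoK2, SimpleGraph.fromRel_adj] at this
        rcases this.2 with h | h
        · exact hpq h
        · exact hpq h.symm
      obtain ⟨i1, j1, hij1, h01, h11, hvix1⟩ := hadj _ _ E1
      obtain ⟨i2, j2, hij2, h02, h12, hvix2⟩ := hadj _ _ E2
      rcases le_or_gt i1 i2 with h | h
      · have hlt : i1 < j2 := lt_of_le_of_lt h hij2
        have hA : G.Adj (v i1) (v j2) := (hvw _ _ hlt).mpr ⟨h01, h12⟩
        rcases hvix1 with ⟨hx, -⟩ | ⟨hx, -⟩ <;> rcases hvix2 with ⟨-, hy⟩ | ⟨-, hy⟩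
        · exact N (0,0) (1,1) (by decide) (by rwa [hx, hy] at hA)
        · exact N (0,0) (1,0) (by decide) (by rwa [hx, hy] at hA)
        · exact N (0,1) (1,1) (by decide) (by rwa [hx, hy] at hA)
        · exact N (0,1) (1,0) (by decide) (by rwa [hx, hy] at hA)
      · have hlt : i2 < j1 := lt_of_lt_of_le h (le_of_lt hij1)
        have hA : G.Adj (v i2) (v j1) := (hvw _ _ hlt).mpr ⟨h02, h11⟩
        rcases hvix1 with ⟨-, hy⟩ | ⟨-, hy⟩ <;> rcases hvix2 with ⟨hx, -⟩ | ⟨hx, -⟩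
        · exact N (1,0) (0,1) (by decide) (by rwa [hx, hy] at hA)
        · exact N (1,1) (0,1) (by decide) (by rwa [hx, hy] at hA)
        · exact N (1,0) (0,0) (by decide) (by rwa [hx, hy] at hA)
        · exact N (1,1) (0,0) (by decide) (by rwa [hx, hy] at hA)
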